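/- Let c ∈ ℂ with Re(c) > 0, a ≥ b > 0, ρ = √(a²−b²), R = (a+b)/ρ, and 0 < ε ≤ |c| − √(a(a+b)). Then |(1 − ε/|c|) + √((1 − ε/|c|)² − (ρ/c)²)| ≥ ρR/|c|, where the square root is the principal branch (with nonnegative real part). -/

import Mathlib

lemma key_real (t x K2 W r D : ℝ) (ht : 0 ≤ t) (hx : 0 ≤ x) (hD : 0 ≤ D) (hW : 0 ≤ W)
    (hD2 : D^2 = (t^2 - r)^2 + (W^2 - r^2))
    (hx2 : x^2 = (D + t^2 - r)/2)
    (h1 : K2 + W ≤ 2*t^2) (h2 : W ≤ K2) :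
    K2 ≤ t^2 + D + 2*t*x := by
  by_cases hK : K2 ≤ t^2 + D
  · nlinarith [mul_nonneg ht hx]
  · push_neg at hK
    have hAW : W ≤ t^2 := by linarith
    have h3 : (K2 - t^2 - D)^2 ≤ (2*t*x)^2 := by
      have hsq : (2*t*x)^2 = 2*t^2*(D + t^2 - r) := by ring_nf; nlinarith [hx2]
      nlinarith [mul_nonneg hD (by linarith : (0:ℝ) ≤ 2*t^2 - W),
        mul_nonneg hW (by linarith : (0:ℝ) ≤ t^2 - W),
        sq_nonneg (t^2 - W - D), mul_nonneg (mul_nonneg hW hW) hW]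
    have h4 : K2 - t^2 - D ≤ 2*t*x := by
      nlinarith [mul_nonneg ht hx]
    linarith

/-- Key inequality in the decay bound for the inverse square root: with `ρ = √(a²-b²)`,
`R = (a+b)/ρ`, `Re c > 0` and `0 < ε ≤ |c| - √(a(a+b))`, one has
`|(1 - ε/|c|) + √((1 - ε/|c|)² - (ρ/c)²)| ≥ ρR/|c|` (principal square root). -/
theorem stmt_9 (a b : ℝ) (hab : b ≤ a) (hb : 0 < b) (c : ℂ) (hc : 0 < c.re)
    (ρ R : ℝ) (hρ : ρ = Real.sqrt (a ^ 2 - b ^ 2)) (hR : R = (a + b) / ρ)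
    (ε : ℝ) (hε : 0 < ε) (hεc : ε ≤ ‖c‖ - Real.sqrt (a * (a + b))) :
    ρ * R / ‖c‖ ≤
      ‖(1 - (ε / ‖c‖ : ℝ) : ℂ) +
        (((1 - (ε / ‖c‖ : ℝ) : ℂ)) ^ 2 - ((ρ : ℂ) / c) ^ 2) ^ ((1 : ℂ) / 2)‖ := by
  have hc0 : c ≠ 0 := fun h => by simp [h] at hc
  have habs : 0 < ‖c‖ := norm_pos_iff.mpr hc0
  rcases eq_or_lt_of_le (hρ ▸ Real.sqrt_nonneg (a ^ 2 - b ^ 2)) with hρ0 | hρpos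
  · rw [← hρ0]
    simp
  · -- main case : ρ > 0
    have hab2 : 0 < a ^ 2 - b ^ 2 := by
      by_contra h
      push_neg at h
      rw [hρ, Real.sqrt_eq_zero_of_nonpos h] at hρpos
      exact lt_irrefl 0 hρpos
    have hρsq : ρ ^ 2 = a ^ 2 - b ^ 2 := by
      rw [hρ, Real.sq_sqrt hab2.le]
    have habpos : 0 < a + b := by linarith
    have hq : ρ ^ 2 ≤ (a + b) ^ 2 := by nlinarith [hρsq, mul_pos hb (lt_of_lt_of_le hb hab)]
    have hρR : ρ * R = a + b := by
      rw [hR]; field_simp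
    rw [hρR]
    set t : ℝ := 1 - ε / ‖c‖ with ht_def
    -- t * |c| = |c| - ε ≥ √(a(a+b)) ≥ 0
    have htc : t * ‖c‖ = ‖c‖ - ε := by
      rw [ht_def, sub_mul, div_mul_cancel₀ _ habs.ne', one_mul]
    have hsab : 0 ≤ Real.sqrt (a * (a + b)) := Real.sqrt_nonneg _
    have htc2 : Real.sqrt (a * (a + b)) ≤ t * ‖c‖ := by
      rw [htc]; linarith
    have ht0 : 0 ≤ t := by
      by_contra h
      push_neg at h
      nlinarith
    have htsq : a * (a + b) ≤ (t * ‖c‖) ^ 2 := by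
      nlinarith [Real.sq_sqrt (by nlinarith : (0:ℝ) ≤ a * (a + b))]
    -- complex objects
    set Wc : ℂ := ((ρ : ℂ) / c) ^ 2 with hWc_def
    set z : ℂ := ((t : ℝ) : ℂ) ^ 2 - Wc with hz_def
    set s : ℂ := z ^ ((1 : ℂ) / 2) with hs_def
    have hs2 : s ^ 2 = z := by
      rw [hs_def, show (1 : ℂ) / 2 = ((2 : ℕ) : ℂ)⁻¹ by norm_num]
      exact Complex.cpow_nat_inv_pow z two_ne_zero
    set D : ℝ := ‖z‖ with hD_def
    set r : ℝ := Wc.re with hr_def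
    set W : ℝ := ρ ^ 2 / ‖c‖ ^ 2 with hW_def
    have hWabs : ‖Wc‖ = W := by
      rw [hWc_def, hW_def, norm_pow, norm_div, Complex.norm_of_nonneg hρpos.le,
        div_pow]
    have hzre : z.re = t ^ 2 - r := by
      simp [hz_def, hr_def, Complex.sub_re, ← Complex.ofReal_pow]
    have hW2 : W ^ 2 = r ^ 2 + Wc.im ^ 2 := by
      have := Complex.sq_norm Wc
      rw [hWabs] at this
      rw [this, Complex.normSq_apply, hr_def]; ring
    have hD2 : D ^ 2 = (t ^ 2 - r) ^ 2 + (W ^ 2 - r ^ 2) := by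
      have h := Complex.sq_norm z
      rw [← hD_def] at h
      rw [h, Complex.normSq_apply, hzre]
      have hzim : z.im = -Wc.im := by simp [hz_def, ← Complex.ofReal_pow]
      rw [hzim, hW2]; ring
    set x : ℝ := s.re with hx_def
    have hxval : x = Real.sqrt ((D + (t ^ 2 - r)) / 2) := by
      rw [hx_def, hs_def, one_div, show ((2:ℂ))⁻¹ = ((2⁻¹ : ℂ)) from rfl,
        Complex.cpow_inv_two_re, ← hD_def, hzre]
    have hx0 : 0 ≤ x := by rw [hxval]; exact Real.sqrt_nonneg _
    have hDre : 0 ≤ D + (t ^ 2 - r) := by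
      have := Complex.abs_re_le_norm z
      rw [← hD_def, hzre] at this
      cases' abs_le.mp this with h1 h2
      linarith
    have hx2 : x ^ 2 = (D + t ^ 2 - r) / 2 := by
      rw [hxval, Real.sq_sqrt (div_nonneg hDre (by norm_num))]
      ring_nf
    have hD0 : 0 ≤ D := hD_def ▸ norm_nonneg z
    have hW0 : 0 ≤ W := by positivity
    set K2 : ℝ := (a + b) ^ 2 / ‖c‖ ^ 2 with hK2_def
    have h1 : K2 + W ≤ 2 * t ^ 2 := by
      rw [hK2_def, hW_def, ← add_div, div_le_iff₀ (by positivity)]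
      linarith [htsq, hρsq]
    have h2 : W ≤ K2 := by
      rw [hW_def, hK2_def]
      gcongr
    have key := key_real t x K2 W r D ht0 hx0 hD0 hW0 hD2 hx2 h1 h2
    have hcoe0 : (1 - (ε / ‖c‖ : ℝ) : ℂ) = ((t : ℝ) : ℂ) := by
      push_cast [ht_def]; ring
    have hrepr : (((1 - (ε / ‖c‖ : ℝ) : ℂ)) ^ 2 - ((ρ : ℂ) / c) ^ 2) ^ ((1 : ℂ) / 2)
        = s := by
      rw [hcoe0, hs_def, hz_def, hWc_def]
    rw [hrepr]
    clear_value t Wc z s D r W x K2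
    -- now compute |t + s|²
    have habs_sq : ‖(1 - (ε / ‖c‖ : ℝ) : ℂ) + s‖ ^ 2
        = t ^ 2 + D + 2 * t * x := by
      have hcoe : (1 - (ε / ‖c‖ : ℝ) : ℂ) = ((t : ℝ) : ℂ) := by
        push_cast [ht_def]; ring
      have hsabs : x ^ 2 + s.im ^ 2 = D := by
        have h := Complex.sq_norm s
        have h2' : ‖s‖ ^ 2 = D := by
          rw [hD_def, ← hs2, norm_pow]
        rw [h2'] at h
        rw [h, Complex.normSq_apply, hx_def]; ring
      rw [hcoe, Complex.sq_norm, Complex.normSq_apply]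
      simp only [Complex.add_re, Complex.add_im, Complex.ofReal_re, Complex.ofReal_im]
      rw [← hx_def]
      linear_combination hsabs
    have hfin : ((a + b) / ‖c‖) ^ 2 ≤
        ‖(1 - (ε / ‖c‖ : ℝ) : ℂ) + s‖ ^ 2 := by
      rw [habs_sq, div_pow, ← hK2_def]
      exact key
    calc (a + b) / ‖c‖
        = Real.sqrt (((a + b) / ‖c‖) ^ 2) := by
          rw [Real.sqrt_sq (by positivity)]
      _ ≤ Real.sqrt (‖(1 - (ε / ‖c‖ : ℝ) : ℂ) + s‖ ^ 2) :=
          Real.sqrt_le_sqrt hfin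
      _ = _ := Real.sqrt_sq (norm_nonneg _)
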